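/- (Theorem 3, right coaction) The assignments a ↦ a⊗a + b⊗c, b ↦ a⊗b + b⊗d, c ↦ c⊗a + d⊗c, d ↦ c⊗b + d⊗d, θⁱ ↦ θⁱ⊗1 (i = 0,1,2) extend to well-defined ℂ-algebra homomorphisms Δ_R : M_q^I → M_q^I ⊗ A_q and Δ_R : M_q^II → M_q^II ⊗ A_q. -/

import Mathlib

open scoped TensorProduct

noncomputable section
set_option synthInstance.maxHeartbeats 1000000
set_option maxHeartbeats 1000000

/-- The free ℂ-algebra on the generators `a, b, c, d, θ⁰, θ¹, θ²`. -/
abbrev F7 : Type := FreeAlgebra ℂ (Fin 7)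

/-- The generators: `a = g 0`, `b = g 1`, `c = g 2`, `d = g 3`, `θ⁰ = g 4`, `θ¹ = g 5`,
`θ² = g 6`. -/
def g (i : Fin 7) : F7 := FreeAlgebra.ι ℂ i

/-- The free ℂ-algebra on the generators `a, b, c, d`. -/
abbrev F4 : Type := FreeAlgebra ℂ (Fin 4)

def gA (i : Fin 4) : F4 := FreeAlgebra.ι ℂ i

/-- The defining relations of the function algebra `A_q = Fun(SL_q(2))`. -/
inductive RelA (q : ℂ) : F4 → F4 → Prop
  | rel_ab : RelA q (gA 0 * gA 1) (q • (gA 1 * gA 0))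
  | rel_ac : RelA q (gA 0 * gA 2) (q • (gA 2 * gA 0))
  | rel_bc : RelA q (gA 1 * gA 2) (gA 2 * gA 1)
  | rel_bd : RelA q (gA 1 * gA 3) (q • (gA 3 * gA 1))
  | rel_cd : RelA q (gA 2 * gA 3) (q • (gA 3 * gA 2))
  | rel_adda : RelA q (gA 0 * gA 3 - gA 3 * gA 0) ((q - q⁻¹) • (gA 1 * gA 2))
  | rel_det : RelA q (gA 0 * gA 3 - q • (gA 1 * gA 2)) 1

/-- `A_q = Fun(SL_q(2))`. -/
abbrev Aq (q : ℂ) : Type := RingQuot (RelA q)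

def mkAq (q : ℂ) : F4 →ₐ[ℂ] Aq q := RingQuot.mkAlgHom ℂ (RelA q)

def aq (q : ℂ) : Aq q := mkAq q (gA 0)
def bq (q : ℂ) : Aq q := mkAq q (gA 1)
def cq (q : ℂ) : Aq q := mkAq q (gA 2)
def dq (q : ℂ) : Aq q := mkAq q (gA 3)

/-- The defining relations of the quantum algebra (type I). -/
inductive RelI (q : ℂ) : F7 → F7 → Prop
  | rel_ab : RelI q (g 0 * g 1) (q • (g 1 * g 0))
  | rel_ac : RelI q (g 0 * g 2) (q • (g 2 * g 0))
  | rel_bc : RelI q (g 1 * g 2) (g 2 * g 1)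
  | rel_bd : RelI q (g 1 * g 3) (q • (g 3 * g 1))
  | rel_cd : RelI q (g 2 * g 3) (q • (g 3 * g 2))
  | rel_adda : RelI q (g 0 * g 3 - g 3 * g 0) ((q - q⁻¹) • (g 1 * g 2))
  | rel_det : RelI q (g 0 * g 3 - q • (g 1 * g 2)) 1
  | rel_t0a : RelI q (g 4 * g 0) (g 0 * g 4 + (q ^ 2 * (q - q⁻¹)) • (g 2 * g 5))
  | rel_t1a : RelI q (g 5 * g 0) (q⁻¹ • (g 0 * g 5))
  | rel_t2a : RelI q (g 6 * g 0) (q • (g 0 * g 6) - ((q - q⁻¹) * (q + q⁻¹)) • (g 2 * g 4))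
  | rel_t0b : RelI q (g 4 * g 1) (g 1 * g 4 + (q ^ 2 * (q - q⁻¹)) • (g 3 * g 5))
  | rel_t1b : RelI q (g 5 * g 1) (q⁻¹ • (g 1 * g 5))
  | rel_t2b : RelI q (g 6 * g 1) (q • (g 1 * g 6) - ((q - q⁻¹) * (q + q⁻¹)) • (g 3 * g 4))
  | rel_t0c : RelI q (g 4 * g 2) (g 2 * g 4)
  | rel_t1c : RelI q (g 5 * g 2) (q • (g 2 * g 5))
  | rel_t2c : RelI q (g 6 * g 2) (q⁻¹ • (g 2 * g 6))
  | rel_t0d : RelI q (g 4 * g 3) (g 3 * g 4)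
  | rel_t1d : RelI q (g 5 * g 3) (q • (g 3 * g 5))
  | rel_t2d : RelI q (g 6 * g 3) (q⁻¹ • (g 3 * g 6))
  | rel_th00 : RelI q (g 4 * g 4) ((q ^ 2 * (q - q⁻¹) / (q + q⁻¹)) • (g 5 * g 6))
  | rel_th11 : RelI q (g 5 * g 5) 0
  | rel_th22 : RelI q (g 6 * g 6) 0
  | rel_th12 : RelI q (g 5 * g 6) (-(g 6 * g 5))
  | rel_th10 : RelI q (g 5 * g 4) ((-(q ^ 2)⁻¹) • (g 4 * g 5))
  | rel_th20 : RelI q (g 6 * g 4) ((-(q ^ 2)) • (g 4 * g 6))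

/-- The type-I quantum algebra. -/
abbrev MqI (q : ℂ) : Type := RingQuot (RelI q)

def mkI (q : ℂ) : F7 →ₐ[ℂ] MqI q := RingQuot.mkAlgHom ℂ (RelI q)

def aI (q : ℂ) : MqI q := mkI q (g 0)
def bI (q : ℂ) : MqI q := mkI q (g 1)
def cI (q : ℂ) : MqI q := mkI q (g 2)
def dI (q : ℂ) : MqI q := mkI q (g 3)
def t0I (q : ℂ) : MqI q := mkI q (g 4)
def t1I (q : ℂ) : MqI q := mkI q (g 5)
def t2I (q : ℂ) : MqI q := mkI q (g 6)

/-- The defining relations of the quantum algebra (type II). -/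
inductive RelII (q : ℂ) : F7 → F7 → Prop
  | rel_ab : RelII q (g 0 * g 1) (q • (g 1 * g 0))
  | rel_ac : RelII q (g 0 * g 2) (q • (g 2 * g 0))
  | rel_bc : RelII q (g 1 * g 2) (g 2 * g 1)
  | rel_bd : RelII q (g 1 * g 3) (q • (g 3 * g 1))
  | rel_cd : RelII q (g 2 * g 3) (q • (g 3 * g 2))
  | rel_adda : RelII q (g 0 * g 3 - g 3 * g 0) ((q - q⁻¹) • (g 1 * g 2))
  | rel_det : RelII q (g 0 * g 3 - q • (g 1 * g 2)) 1
  | rel_t0a : RelII q (g 4 * g 0) (g 0 * g 4)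
  | rel_t1a : RelII q (g 5 * g 0) (q • (g 0 * g 5))
  | rel_t2a : RelII q (g 6 * g 0) (q⁻¹ • (g 0 * g 6))
  | rel_t0b : RelII q (g 4 * g 1) (g 1 * g 4)
  | rel_t1b : RelII q (g 5 * g 1) (q • (g 1 * g 5))
  | rel_t2b : RelII q (g 6 * g 1) (q⁻¹ • (g 1 * g 6))
  | rel_t0c : RelII q (g 4 * g 2) (g 2 * g 4 + (q - q⁻¹) • (g 0 * g 6))
  | rel_t1c : RelII q (g 5 * g 2) (q⁻¹ • (g 2 * g 5) - ((q - q⁻¹) * (q + q⁻¹) / q ^ 2) • (g 0 * g 4))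
  | rel_t2c : RelII q (g 6 * g 2) (q • (g 2 * g 6))
  | rel_t0d : RelII q (g 4 * g 3) (g 3 * g 4 + (q - q⁻¹) • (g 1 * g 6))
  | rel_t1d : RelII q (g 5 * g 3) (q⁻¹ • (g 3 * g 5) - ((q - q⁻¹) * (q + q⁻¹) / q ^ 2) • (g 1 * g 4))
  | rel_t2d : RelII q (g 6 * g 3) (q • (g 3 * g 6))
  | rel_th00 : RelII q (g 4 * g 4) ((q ^ 2 * (q - q⁻¹) / (q + q⁻¹)) • (g 5 * g 6))
  | rel_th11 : RelII q (g 5 * g 5) 0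
  | rel_th22 : RelII q (g 6 * g 6) 0
  | rel_th12 : RelII q (g 5 * g 6) (-(g 6 * g 5))
  | rel_th10 : RelII q (g 5 * g 4) ((-(q ^ 2)⁻¹) • (g 4 * g 5))
  | rel_th20 : RelII q (g 6 * g 4) ((-(q ^ 2)) • (g 4 * g 6))

/-- The type-II quantum algebra. -/
abbrev MqII (q : ℂ) : Type := RingQuot (RelII q)

def mkII (q : ℂ) : F7 →ₐ[ℂ] MqII q := RingQuot.mkAlgHom ℂ (RelII q)

def aII (q : ℂ) : MqII q := mkII q (g 0)
def bII (q : ℂ) : MqII q := mkII q (g 1)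
def cII (q : ℂ) : MqII q := mkII q (g 2)
def dII (q : ℂ) : MqII q := mkII q (g 3)
def t0II (q : ℂ) : MqII q := mkII q (g 4)
def t1II (q : ℂ) : MqII q := mkII q (g 5)
def t2II (q : ℂ) : MqII q := mkII q (g 6)

lemma A_ab (q : ℂ) : aq q * bq q = q • (bq q * aq q) := by
  simpa only [aq, bq, cq, dq, mkAq, map_mul, map_smul, map_sub, map_one] using
    RingQuot.mkAlgHom_rel ℂ (RelA.rel_ab (q := q))

lemma A_ac (q : ℂ) : aq q * cq q = q • (cq q * aq q) := by
  simpa only [aq, bq, cq, dq, mkAq, map_mul, map_smul, map_sub, map_one] using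
    RingQuot.mkAlgHom_rel ℂ (RelA.rel_ac (q := q))

lemma A_bc (q : ℂ) : bq q * cq q = cq q * bq q := by
  simpa only [aq, bq, cq, dq, mkAq, map_mul, map_smul, map_sub, map_one] using
    RingQuot.mkAlgHom_rel ℂ (RelA.rel_bc (q := q))

lemma A_bd (q : ℂ) : bq q * dq q = q • (dq q * bq q) := by
  simpa only [aq, bq, cq, dq, mkAq, map_mul, map_smul, map_sub, map_one] using
    RingQuot.mkAlgHom_rel ℂ (RelA.rel_bd (q := q))

lemma A_cd (q : ℂ) : cq q * dq q = q • (dq q * cq q) := by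
  simpa only [aq, bq, cq, dq, mkAq, map_mul, map_smul, map_sub, map_one] using
    RingQuot.mkAlgHom_rel ℂ (RelA.rel_cd (q := q))

lemma A_adda (q : ℂ) : aq q * dq q - dq q * aq q = (q - q⁻¹) • (bq q * cq q) := by
  simpa only [aq, bq, cq, dq, mkAq, map_mul, map_smul, map_sub, map_one] using
    RingQuot.mkAlgHom_rel ℂ (RelA.rel_adda (q := q))

lemma A_det (q : ℂ) : aq q * dq q - q • (bq q * cq q) = 1 := by
  simpa only [aq, bq, cq, dq, mkAq, map_mul, map_smul, map_sub, map_one] using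
    RingQuot.mkAlgHom_rel ℂ (RelA.rel_det (q := q))

lemma A_ad (q : ℂ) : aq q * dq q = (q - q⁻¹) • (cq q * bq q) + dq q * aq q := by
  have h := A_adda q
  rw [A_bc q] at h
  rwa [sub_eq_iff_eq_add] at h

lemma A_da (q : ℂ) : dq q * aq q = 1 + q⁻¹ • (cq q * bq q) := by
  have h := A_det q
  rw [A_bc q, sub_eq_iff_eq_add] at h
  have h2 := A_ad q
  have h4 : dq q * aq q = 1 + q • (cq q * bq q) - (q - q⁻¹) • (cq q * bq q) := by
    rw [← h, h2]; abel
  rw [h4]; match_scalars <;> ring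

lemma I_ab (q : ℂ) : aI q * bI q = q • (bI q * aI q) := by
  simpa only [aI, bI, cI, dI, mkI, map_mul, map_smul, map_sub, map_one] using
    RingQuot.mkAlgHom_rel ℂ (RelI.rel_ab (q := q))

lemma I_ac (q : ℂ) : aI q * cI q = q • (cI q * aI q) := by
  simpa only [aI, bI, cI, dI, mkI, map_mul, map_smul, map_sub, map_one] using
    RingQuot.mkAlgHom_rel ℂ (RelI.rel_ac (q := q))

lemma I_bc (q : ℂ) : bI q * cI q = cI q * bI q := by
  simpa only [aI, bI, cI, dI, mkI, map_mul, map_smul, map_sub, map_one] using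
    RingQuot.mkAlgHom_rel ℂ (RelI.rel_bc (q := q))

lemma I_bd (q : ℂ) : bI q * dI q = q • (dI q * bI q) := by
  simpa only [aI, bI, cI, dI, mkI, map_mul, map_smul, map_sub, map_one] using
    RingQuot.mkAlgHom_rel ℂ (RelI.rel_bd (q := q))

lemma I_cd (q : ℂ) : cI q * dI q = q • (dI q * cI q) := by
  simpa only [aI, bI, cI, dI, mkI, map_mul, map_smul, map_sub, map_one] using
    RingQuot.mkAlgHom_rel ℂ (RelI.rel_cd (q := q))

lemma I_adda (q : ℂ) : aI q * dI q - dI q * aI q = (q - q⁻¹) • (bI q * cI q) := by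
  simpa only [aI, bI, cI, dI, mkI, map_mul, map_smul, map_sub, map_one] using
    RingQuot.mkAlgHom_rel ℂ (RelI.rel_adda (q := q))

lemma I_det (q : ℂ) : aI q * dI q - q • (bI q * cI q) = 1 := by
  simpa only [aI, bI, cI, dI, mkI, map_mul, map_smul, map_sub, map_one] using
    RingQuot.mkAlgHom_rel ℂ (RelI.rel_det (q := q))

lemma I_ad (q : ℂ) : aI q * dI q = (q - q⁻¹) • (cI q * bI q) + dI q * aI q := by
  have h := I_adda q
  rw [I_bc q] at h
  rwa [sub_eq_iff_eq_add] at h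

lemma I_da (q : ℂ) : dI q * aI q = 1 + q⁻¹ • (cI q * bI q) := by
  have h := I_det q
  rw [I_bc q, sub_eq_iff_eq_add] at h
  have h2 := I_ad q
  have h4 : dI q * aI q = 1 + q • (cI q * bI q) - (q - q⁻¹) • (cI q * bI q) := by
    rw [← h, h2]; abel
  rw [h4]; match_scalars <;> ring

lemma I_t0a (q : ℂ) : t0I q * aI q = aI q * t0I q + (q ^ 2 * (q - q⁻¹)) • (cI q * t1I q) := by
  simpa only [aI, bI, cI, dI, t0I, t1I, t2I, mkI, map_mul, map_smul, map_add, map_sub, map_neg, map_zero] using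
    RingQuot.mkAlgHom_rel ℂ (RelI.rel_t0a (q := q))

lemma I_t1a (q : ℂ) : t1I q * aI q = q⁻¹ • (aI q * t1I q) := by
  simpa only [aI, bI, cI, dI, t0I, t1I, t2I, mkI, map_mul, map_smul, map_add, map_sub, map_neg, map_zero] using
    RingQuot.mkAlgHom_rel ℂ (RelI.rel_t1a (q := q))

lemma I_t2a (q : ℂ) : t2I q * aI q = q • (aI q * t2I q) - ((q - q⁻¹) * (q + q⁻¹)) • (cI q * t0I q) := by
  simpa only [aI, bI, cI, dI, t0I, t1I, t2I, mkI, map_mul, map_smul, map_add, map_sub, map_neg, map_zero] using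
    RingQuot.mkAlgHom_rel ℂ (RelI.rel_t2a (q := q))

lemma I_t0b (q : ℂ) : t0I q * bI q = bI q * t0I q + (q ^ 2 * (q - q⁻¹)) • (dI q * t1I q) := by
  simpa only [aI, bI, cI, dI, t0I, t1I, t2I, mkI, map_mul, map_smul, map_add, map_sub, map_neg, map_zero] using
    RingQuot.mkAlgHom_rel ℂ (RelI.rel_t0b (q := q))

lemma I_t1b (q : ℂ) : t1I q * bI q = q⁻¹ • (bI q * t1I q) := by
  simpa only [aI, bI, cI, dI, t0I, t1I, t2I, mkI, map_mul, map_smul, map_add, map_sub, map_neg, map_zero] using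
    RingQuot.mkAlgHom_rel ℂ (RelI.rel_t1b (q := q))

lemma I_t2b (q : ℂ) : t2I q * bI q = q • (bI q * t2I q) - ((q - q⁻¹) * (q + q⁻¹)) • (dI q * t0I q) := by
  simpa only [aI, bI, cI, dI, t0I, t1I, t2I, mkI, map_mul, map_smul, map_add, map_sub, map_neg, map_zero] using
    RingQuot.mkAlgHom_rel ℂ (RelI.rel_t2b (q := q))

lemma I_t0c (q : ℂ) : t0I q * cI q = cI q * t0I q := by
  simpa only [aI, bI, cI, dI, t0I, t1I, t2I, mkI, map_mul, map_smul, map_add, map_sub, map_neg, map_zero] using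
    RingQuot.mkAlgHom_rel ℂ (RelI.rel_t0c (q := q))

lemma I_t1c (q : ℂ) : t1I q * cI q = q • (cI q * t1I q) := by
  simpa only [aI, bI, cI, dI, t0I, t1I, t2I, mkI, map_mul, map_smul, map_add, map_sub, map_neg, map_zero] using
    RingQuot.mkAlgHom_rel ℂ (RelI.rel_t1c (q := q))

lemma I_t2c (q : ℂ) : t2I q * cI q = q⁻¹ • (cI q * t2I q) := by
  simpa only [aI, bI, cI, dI, t0I, t1I, t2I, mkI, map_mul, map_smul, map_add, map_sub, map_neg, map_zero] using
    RingQuot.mkAlgHom_rel ℂ (RelI.rel_t2c (q := q))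

lemma I_t0d (q : ℂ) : t0I q * dI q = dI q * t0I q := by
  simpa only [aI, bI, cI, dI, t0I, t1I, t2I, mkI, map_mul, map_smul, map_add, map_sub, map_neg, map_zero] using
    RingQuot.mkAlgHom_rel ℂ (RelI.rel_t0d (q := q))

lemma I_t1d (q : ℂ) : t1I q * dI q = q • (dI q * t1I q) := by
  simpa only [aI, bI, cI, dI, t0I, t1I, t2I, mkI, map_mul, map_smul, map_add, map_sub, map_neg, map_zero] using
    RingQuot.mkAlgHom_rel ℂ (RelI.rel_t1d (q := q))

lemma I_t2d (q : ℂ) : t2I q * dI q = q⁻¹ • (dI q * t2I q) := by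
  simpa only [aI, bI, cI, dI, t0I, t1I, t2I, mkI, map_mul, map_smul, map_add, map_sub, map_neg, map_zero] using
    RingQuot.mkAlgHom_rel ℂ (RelI.rel_t2d (q := q))

lemma I_th00 (q : ℂ) : t0I q * t0I q = (q ^ 2 * (q - q⁻¹) / (q + q⁻¹)) • (t1I q * t2I q) := by
  simpa only [aI, bI, cI, dI, t0I, t1I, t2I, mkI, map_mul, map_smul, map_add, map_sub, map_neg, map_zero] using
    RingQuot.mkAlgHom_rel ℂ (RelI.rel_th00 (q := q))

lemma I_th11 (q : ℂ) : t1I q * t1I q = 0 := by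
  simpa only [aI, bI, cI, dI, t0I, t1I, t2I, mkI, map_mul, map_smul, map_add, map_sub, map_neg, map_zero] using
    RingQuot.mkAlgHom_rel ℂ (RelI.rel_th11 (q := q))

lemma I_th22 (q : ℂ) : t2I q * t2I q = 0 := by
  simpa only [aI, bI, cI, dI, t0I, t1I, t2I, mkI, map_mul, map_smul, map_add, map_sub, map_neg, map_zero] using
    RingQuot.mkAlgHom_rel ℂ (RelI.rel_th22 (q := q))

lemma I_th12 (q : ℂ) : t1I q * t2I q = -(t2I q * t1I q) := by
  simpa only [aI, bI, cI, dI, t0I, t1I, t2I, mkI, map_mul, map_smul, map_add, map_sub, map_neg, map_zero] using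
    RingQuot.mkAlgHom_rel ℂ (RelI.rel_th12 (q := q))

lemma I_th10 (q : ℂ) : t1I q * t0I q = (-(q ^ 2)⁻¹) • (t0I q * t1I q) := by
  simpa only [aI, bI, cI, dI, t0I, t1I, t2I, mkI, map_mul, map_smul, map_add, map_sub, map_neg, map_zero] using
    RingQuot.mkAlgHom_rel ℂ (RelI.rel_th10 (q := q))

lemma I_th20 (q : ℂ) : t2I q * t0I q = (-(q ^ 2)) • (t0I q * t2I q) := by
  simpa only [aI, bI, cI, dI, t0I, t1I, t2I, mkI, map_mul, map_smul, map_add, map_sub, map_neg, map_zero] using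
    RingQuot.mkAlgHom_rel ℂ (RelI.rel_th20 (q := q))

lemma II_ab (q : ℂ) : aII q * bII q = q • (bII q * aII q) := by
  simpa only [aII, bII, cII, dII, mkII, map_mul, map_smul, map_sub, map_one] using
    RingQuot.mkAlgHom_rel ℂ (RelII.rel_ab (q := q))

lemma II_ac (q : ℂ) : aII q * cII q = q • (cII q * aII q) := by
  simpa only [aII, bII, cII, dII, mkII, map_mul, map_smul, map_sub, map_one] using
    RingQuot.mkAlgHom_rel ℂ (RelII.rel_ac (q := q))

lemma II_bc (q : ℂ) : bII q * cII q = cII q * bII q := by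
  simpa only [aII, bII, cII, dII, mkII, map_mul, map_smul, map_sub, map_one] using
    RingQuot.mkAlgHom_rel ℂ (RelII.rel_bc (q := q))

lemma II_bd (q : ℂ) : bII q * dII q = q • (dII q * bII q) := by
  simpa only [aII, bII, cII, dII, mkII, map_mul, map_smul, map_sub, map_one] using
    RingQuot.mkAlgHom_rel ℂ (RelII.rel_bd (q := q))

lemma II_cd (q : ℂ) : cII q * dII q = q • (dII q * cII q) := by
  simpa only [aII, bII, cII, dII, mkII, map_mul, map_smul, map_sub, map_one] using
    RingQuot.mkAlgHom_rel ℂ (RelII.rel_cd (q := q))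

lemma II_adda (q : ℂ) : aII q * dII q - dII q * aII q = (q - q⁻¹) • (bII q * cII q) := by
  simpa only [aII, bII, cII, dII, mkII, map_mul, map_smul, map_sub, map_one] using
    RingQuot.mkAlgHom_rel ℂ (RelII.rel_adda (q := q))

lemma II_det (q : ℂ) : aII q * dII q - q • (bII q * cII q) = 1 := by
  simpa only [aII, bII, cII, dII, mkII, map_mul, map_smul, map_sub, map_one] using
    RingQuot.mkAlgHom_rel ℂ (RelII.rel_det (q := q))

lemma II_ad (q : ℂ) : aII q * dII q = (q - q⁻¹) • (cII q * bII q) + dII q * aII q := by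
  have h := II_adda q
  rw [II_bc q] at h
  rwa [sub_eq_iff_eq_add] at h

lemma II_da (q : ℂ) : dII q * aII q = 1 + q⁻¹ • (cII q * bII q) := by
  have h := II_det q
  rw [II_bc q, sub_eq_iff_eq_add] at h
  have h2 := II_ad q
  have h4 : dII q * aII q = 1 + q • (cII q * bII q) - (q - q⁻¹) • (cII q * bII q) := by
    rw [← h, h2]; abel
  rw [h4]; match_scalars <;> ring

lemma II_t0a (q : ℂ) : t0II q * aII q = aII q * t0II q := by
  simpa only [aII, bII, cII, dII, t0II, t1II, t2II, mkII, map_mul, map_smul, map_add, map_sub, map_neg, map_zero] using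
    RingQuot.mkAlgHom_rel ℂ (RelII.rel_t0a (q := q))

lemma II_t1a (q : ℂ) : t1II q * aII q = q • (aII q * t1II q) := by
  simpa only [aII, bII, cII, dII, t0II, t1II, t2II, mkII, map_mul, map_smul, map_add, map_sub, map_neg, map_zero] using
    RingQuot.mkAlgHom_rel ℂ (RelII.rel_t1a (q := q))

lemma II_t2a (q : ℂ) : t2II q * aII q = q⁻¹ • (aII q * t2II q) := by
  simpa only [aII, bII, cII, dII, t0II, t1II, t2II, mkII, map_mul, map_smul, map_add, map_sub, map_neg, map_zero] using
    RingQuot.mkAlgHom_rel ℂ (RelII.rel_t2a (q := q))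

lemma II_t0b (q : ℂ) : t0II q * bII q = bII q * t0II q := by
  simpa only [aII, bII, cII, dII, t0II, t1II, t2II, mkII, map_mul, map_smul, map_add, map_sub, map_neg, map_zero] using
    RingQuot.mkAlgHom_rel ℂ (RelII.rel_t0b (q := q))

lemma II_t1b (q : ℂ) : t1II q * bII q = q • (bII q * t1II q) := by
  simpa only [aII, bII, cII, dII, t0II, t1II, t2II, mkII, map_mul, map_smul, map_add, map_sub, map_neg, map_zero] using
    RingQuot.mkAlgHom_rel ℂ (RelII.rel_t1b (q := q))

lemma II_t2b (q : ℂ) : t2II q * bII q = q⁻¹ • (bII q * t2II q) := by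
  simpa only [aII, bII, cII, dII, t0II, t1II, t2II, mkII, map_mul, map_smul, map_add, map_sub, map_neg, map_zero] using
    RingQuot.mkAlgHom_rel ℂ (RelII.rel_t2b (q := q))

lemma II_t0c (q : ℂ) : t0II q * cII q = cII q * t0II q + (q - q⁻¹) • (aII q * t2II q) := by
  simpa only [aII, bII, cII, dII, t0II, t1II, t2II, mkII, map_mul, map_smul, map_add, map_sub, map_neg, map_zero] using
    RingQuot.mkAlgHom_rel ℂ (RelII.rel_t0c (q := q))

lemma II_t1c (q : ℂ) : t1II q * cII q = q⁻¹ • (cII q * t1II q) - ((q - q⁻¹) * (q + q⁻¹) / q ^ 2) • (aII q * t0II q) := by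
  simpa only [aII, bII, cII, dII, t0II, t1II, t2II, mkII, map_mul, map_smul, map_add, map_sub, map_neg, map_zero] using
    RingQuot.mkAlgHom_rel ℂ (RelII.rel_t1c (q := q))

lemma II_t2c (q : ℂ) : t2II q * cII q = q • (cII q * t2II q) := by
  simpa only [aII, bII, cII, dII, t0II, t1II, t2II, mkII, map_mul, map_smul, map_add, map_sub, map_neg, map_zero] using
    RingQuot.mkAlgHom_rel ℂ (RelII.rel_t2c (q := q))

lemma II_t0d (q : ℂ) : t0II q * dII q = dII q * t0II q + (q - q⁻¹) • (bII q * t2II q) := by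
  simpa only [aII, bII, cII, dII, t0II, t1II, t2II, mkII, map_mul, map_smul, map_add, map_sub, map_neg, map_zero] using
    RingQuot.mkAlgHom_rel ℂ (RelII.rel_t0d (q := q))

lemma II_t1d (q : ℂ) : t1II q * dII q = q⁻¹ • (dII q * t1II q) - ((q - q⁻¹) * (q + q⁻¹) / q ^ 2) • (bII q * t0II q) := by
  simpa only [aII, bII, cII, dII, t0II, t1II, t2II, mkII, map_mul, map_smul, map_add, map_sub, map_neg, map_zero] using
    RingQuot.mkAlgHom_rel ℂ (RelII.rel_t1d (q := q))

lemma II_t2d (q : ℂ) : t2II q * dII q = q • (dII q * t2II q) := by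
  simpa only [aII, bII, cII, dII, t0II, t1II, t2II, mkII, map_mul, map_smul, map_add, map_sub, map_neg, map_zero] using
    RingQuot.mkAlgHom_rel ℂ (RelII.rel_t2d (q := q))

lemma II_th00 (q : ℂ) : t0II q * t0II q = (q ^ 2 * (q - q⁻¹) / (q + q⁻¹)) • (t1II q * t2II q) := by
  simpa only [aII, bII, cII, dII, t0II, t1II, t2II, mkII, map_mul, map_smul, map_add, map_sub, map_neg, map_zero] using
    RingQuot.mkAlgHom_rel ℂ (RelII.rel_th00 (q := q))

lemma II_th11 (q : ℂ) : t1II q * t1II q = 0 := by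
  simpa only [aII, bII, cII, dII, t0II, t1II, t2II, mkII, map_mul, map_smul, map_add, map_sub, map_neg, map_zero] using
    RingQuot.mkAlgHom_rel ℂ (RelII.rel_th11 (q := q))

lemma II_th22 (q : ℂ) : t2II q * t2II q = 0 := by
  simpa only [aII, bII, cII, dII, t0II, t1II, t2II, mkII, map_mul, map_smul, map_add, map_sub, map_neg, map_zero] using
    RingQuot.mkAlgHom_rel ℂ (RelII.rel_th22 (q := q))

lemma II_th12 (q : ℂ) : t1II q * t2II q = -(t2II q * t1II q) := by
  simpa only [aII, bII, cII, dII, t0II, t1II, t2II, mkII, map_mul, map_smul, map_add, map_sub, map_neg, map_zero] using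
    RingQuot.mkAlgHom_rel ℂ (RelII.rel_th12 (q := q))

lemma II_th10 (q : ℂ) : t1II q * t0II q = (-(q ^ 2)⁻¹) • (t0II q * t1II q) := by
  simpa only [aII, bII, cII, dII, t0II, t1II, t2II, mkII, map_mul, map_smul, map_add, map_sub, map_neg, map_zero] using
    RingQuot.mkAlgHom_rel ℂ (RelII.rel_th10 (q := q))

lemma II_th20 (q : ℂ) : t2II q * t0II q = (-(q ^ 2)) • (t0II q * t2II q) := by
  simpa only [aII, bII, cII, dII, t0II, t1II, t2II, mkII, map_mul, map_smul, map_add, map_sub, map_neg, map_zero] using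
    RingQuot.mkAlgHom_rel ℂ (RelII.rel_th20 (q := q))

def rowI (q : ℂ) : Fin 7 → MqI q ⊗[ℂ] Aq q :=
  ![aI q ⊗ₜ[ℂ] aq q + bI q ⊗ₜ[ℂ] cq q, aI q ⊗ₜ[ℂ] bq q + bI q ⊗ₜ[ℂ] dq q, cI q ⊗ₜ[ℂ] aq q + dI q ⊗ₜ[ℂ] cq q, cI q ⊗ₜ[ℂ] bq q + dI q ⊗ₜ[ℂ] dq q, t0I q ⊗ₜ[ℂ] (1 : Aq q), t1I q ⊗ₜ[ℂ] (1 : Aq q), t2I q ⊗ₜ[ℂ] (1 : Aq q)]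

lemma rowI_0 (q : ℂ) : rowI q 0 = aI q ⊗ₜ[ℂ] aq q + bI q ⊗ₜ[ℂ] cq q := rfl
lemma rowI_1 (q : ℂ) : rowI q 1 = aI q ⊗ₜ[ℂ] bq q + bI q ⊗ₜ[ℂ] dq q := rfl
lemma rowI_2 (q : ℂ) : rowI q 2 = cI q ⊗ₜ[ℂ] aq q + dI q ⊗ₜ[ℂ] cq q := rfl
lemma rowI_3 (q : ℂ) : rowI q 3 = cI q ⊗ₜ[ℂ] bq q + dI q ⊗ₜ[ℂ] dq q := rfl
lemma rowI_4 (q : ℂ) : rowI q 4 = t0I q ⊗ₜ[ℂ] (1 : Aq q) := rfl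
lemma rowI_5 (q : ℂ) : rowI q 5 = t1I q ⊗ₜ[ℂ] (1 : Aq q) := rfl
lemma rowI_6 (q : ℂ) : rowI q 6 = t2I q ⊗ₜ[ℂ] (1 : Aq q) := rfl

set_option maxHeartbeats 4000000 in
theorem liftI_ok (q : ℂ) (hq0 : q ≠ 0) : ∀ ⦃x y : F7⦄, RelI q x y →
    (FreeAlgebra.lift ℂ (rowI q)) x = (FreeAlgebra.lift ℂ (rowI q)) y := by
  intro x y h
  cases h <;>
    (simp only [map_mul, map_add, map_sub, map_smul, map_one, map_zero, map_neg, g, FreeAlgebra.lift_ι_apply, rowI_0 q, rowI_1 q, rowI_2 q, rowI_3 q, rowI_4 q, rowI_5 q, rowI_6 q, Algebra.TensorProduct.tmul_mul_tmul, Algebra.TensorProduct.one_def, mul_add, add_mul, mul_sub, sub_mul, smul_add, smul_sub, smul_smul, smul_neg, neg_mul, mul_neg, ← TensorProduct.smul_tmul', TensorProduct.tmul_smul, smul_mul_assoc, mul_smul_comm, TensorProduct.add_tmul, TensorProduct.tmul_add, TensorProduct.sub_tmul, TensorProduct.tmul_sub, TensorProduct.neg_tmul, TensorProduct.tmul_neg,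 one_mul, mul_one, mul_zero, zero_mul, TensorProduct.zero_tmul, TensorProduct.tmul_zero, smul_zero, add_zero, zero_add, I_ab q, I_ac q, I_bc q, I_bd q, I_cd q, I_ad q, I_da q, I_t0a q, I_t1a q, I_t2a q, I_t0b q, I_t1b q, I_t2b q, I_t0c q, I_t1c q, I_t2c q, I_t0d q, I_t1d q, I_t2d q, I_th00 q, I_th11 q, I_th22 q, I_th12 q, I_th10 q, I_th20 q, A_ab q, A_ac q, A_bc q, A_bd q, A_cd q, A_ad q, A_da q]) <;>
    (try match_scalars) <;> (try field_simp) <;> (try ring) <;>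
    exact (fun (c : ℂ) (x : MqI q) => (by rw [TensorProduct.smul_tmul', TensorProduct.smul_tmul', smul_neg, TensorProduct.neg_tmul] : -(c • (x ⊗ₜ[ℂ] (1 : Aq q))) = c • ((-x) ⊗ₜ[ℂ] (1 : Aq q)))) _ _

def phiI (q : ℂ) (hq0 : q ≠ 0) : MqI q →ₐ[ℂ] MqI q ⊗[ℂ] Aq q :=
  RingQuot.liftAlgHom ℂ ⟨FreeAlgebra.lift ℂ (rowI q), liftI_ok q hq0⟩

lemma phiI_apply (q : ℂ) (hq0 : q ≠ 0) (i : Fin 7) :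
    phiI q hq0 (RingQuot.mkAlgHom ℂ (RelI q) (g i)) = rowI q i := by
  rw [phiI, RingQuot.liftAlgHom_mkAlgHom_apply, g, FreeAlgebra.lift_ι_apply]


def rowII (q : ℂ) : Fin 7 → MqII q ⊗[ℂ] Aq q :=
  ![aII q ⊗ₜ[ℂ] aq q + bII q ⊗ₜ[ℂ] cq q, aII q ⊗ₜ[ℂ] bq q + bII q ⊗ₜ[ℂ] dq q, cII q ⊗ₜ[ℂ] aq q + dII q ⊗ₜ[ℂ] cq q, cII q ⊗ₜ[ℂ] bq q + dII q ⊗ₜ[ℂ] dq q, t0II q ⊗ₜ[ℂ] (1 : Aq q), t1II q ⊗ₜ[ℂ] (1 : Aq q), t2II q ⊗ₜ[ℂ] (1 : Aq q)]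

lemma rowII_0 (q : ℂ) : rowII q 0 = aII q ⊗ₜ[ℂ] aq q + bII q ⊗ₜ[ℂ] cq q := rfl
lemma rowII_1 (q : ℂ) : rowII q 1 = aII q ⊗ₜ[ℂ] bq q + bII q ⊗ₜ[ℂ] dq q := rfl
lemma rowII_2 (q : ℂ) : rowII q 2 = cII q ⊗ₜ[ℂ] aq q + dII q ⊗ₜ[ℂ] cq q := rfl
lemma rowII_3 (q : ℂ) : rowII q 3 = cII q ⊗ₜ[ℂ] bq q + dII q ⊗ₜ[ℂ] dq q := rfl
lemma rowII_4 (q : ℂ) : rowII q 4 = t0II q ⊗ₜ[ℂ] (1 : Aq q) := rfl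
lemma rowII_5 (q : ℂ) : rowII q 5 = t1II q ⊗ₜ[ℂ] (1 : Aq q) := rfl
lemma rowII_6 (q : ℂ) : rowII q 6 = t2II q ⊗ₜ[ℂ] (1 : Aq q) := rfl

set_option maxHeartbeats 4000000 in
theorem liftII_ok (q : ℂ) (hq0 : q ≠ 0) : ∀ ⦃x y : F7⦄, RelII q x y →
    (FreeAlgebra.lift ℂ (rowII q)) x = (FreeAlgebra.lift ℂ (rowII q)) y := by
  intro x y h
  cases h <;>
    (simp only [map_mul, map_add, map_sub, map_smul, map_one, map_zero, map_neg, g, FreeAlgebra.lift_ι_apply, rowII_0 q, rowII_1 q, rowII_2 q, rowII_3 q, rowII_4 q, rowII_5 q, rowII_6 q, Algebra.TensorProduct.tmul_mul_tmul, Algebra.TensorProduct.one_def, mul_add, add_mul, mul_sub, sub_mul, smul_add, smul_sub, smul_smul, smul_neg, neg_mul, mul_neg, ← TensorProduct.smul_tmul', TensorProduct.tmul_smul, smul_mul_assoc, mul_smul_comm, TensorProduct.add_tmul, TensorProduct.tmul_add, TensorProduct.sub_tmul, TensorProduct.tmul_sub, TensorProduct.neg_tmul, TensorProduct.tmul_neg,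 one_mul, mul_one, mul_zero, zero_mul, TensorProduct.zero_tmul, TensorProduct.tmul_zero, smul_zero, add_zero, zero_add, II_ab q, II_ac q, II_bc q, II_bd q, II_cd q, II_ad q, II_da q, II_t0a q, II_t1a q, II_t2a q, II_t0b q, II_t1b q, II_t2b q, II_t0c q, II_t1c q, II_t2c q, II_t0d q, II_t1d q, II_t2d q, II_th00 q, II_th11 q, II_th22 q, II_th12 q, II_th10 q, II_th20 q, A_ab q, A_ac q, A_bc q, A_bd q, A_cd q, A_ad q, A_da q]) <;>
    (try match_scalars) <;> (try field_simp) <;> (try ring) <;>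
    exact (fun (c : ℂ) (x : MqII q) => (by rw [TensorProduct.smul_tmul', TensorProduct.smul_tmul', smul_neg, TensorProduct.neg_tmul] : -(c • (x ⊗ₜ[ℂ] (1 : Aq q))) = c • ((-x) ⊗ₜ[ℂ] (1 : Aq q)))) _ _

def phiII (q : ℂ) (hq0 : q ≠ 0) : MqII q →ₐ[ℂ] MqII q ⊗[ℂ] Aq q :=
  RingQuot.liftAlgHom ℂ ⟨FreeAlgebra.lift ℂ (rowII q), liftII_ok q hq0⟩

lemma phiII_apply (q : ℂ) (hq0 : q ≠ 0) (i : Fin 7) :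
    phiII q hq0 (RingQuot.mkAlgHom ℂ (RelII q) (g i)) = rowII q i := by
  rw [phiII, RingQuot.liftAlgHom_mkAlgHom_apply, g, FreeAlgebra.lift_ι_apply]


/-- **Theorem 3, right coaction.** The assignments
`a ↦ a⊗a + b⊗c`, `b ↦ a⊗b + b⊗d`, `c ↦ c⊗a + d⊗c`, `d ↦ c⊗b + d⊗d`, `θⁱ ↦ θⁱ⊗1`
extend to well-defined ℂ-algebra homomorphisms `Δ_R : M_q^I → M_q^I ⊗ A_q` and
`Δ_R : M_q^II → M_q^II ⊗ A_q`. -/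
theorem right_coaction_exists (q : ℂ) (hq0 : q ≠ 0) (hq1 : q ≠ 1) (hqm1 : q ≠ -1) :
    (∃ φ : MqI q →ₐ[ℂ] MqI q ⊗[ℂ] Aq q,
      φ (aI q) = aI q ⊗ₜ aq q + bI q ⊗ₜ cq q ∧
      φ (bI q) = aI q ⊗ₜ bq q + bI q ⊗ₜ dq q ∧
      φ (cI q) = cI q ⊗ₜ aq q + dI q ⊗ₜ cq q ∧
      φ (dI q) = cI q ⊗ₜ bq q + dI q ⊗ₜ dq q ∧
      φ (t0I q) = t0I q ⊗ₜ 1 ∧ φ (t1I q) = t1I q ⊗ₜ 1 ∧ φ (t2I q) = t2I q ⊗ₜ 1) ∧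
    (∃ ψ : MqII q →ₐ[ℂ] MqII q ⊗[ℂ] Aq q,
      ψ (aII q) = aII q ⊗ₜ aq q + bII q ⊗ₜ cq q ∧
      ψ (bII q) = aII q ⊗ₜ bq q + bII q ⊗ₜ dq q ∧
      ψ (cII q) = cII q ⊗ₜ aq q + dII q ⊗ₜ cq q ∧
      ψ (dII q) = cII q ⊗ₜ bq q + dII q ⊗ₜ dq q ∧
      ψ (t0II q) = t0II q ⊗ₜ 1 ∧ ψ (t1II q) = t1II q ⊗ₜ 1 ∧ ψ (t2II q) = t2II q ⊗ₜ 1) := by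
  constructor
  · refine ⟨phiI q hq0, ?_, ?_, ?_, ?_, ?_, ?_, ?_⟩ <;>
      simp only [aI, bI, cI, dI, t0I, t1I, t2I, mkI, phiI_apply q hq0,
        rowI_0, rowI_1, rowI_2, rowI_3, rowI_4, rowI_5, rowI_6]
  · refine ⟨phiII q hq0, ?_, ?_, ?_, ?_, ?_, ?_, ?_⟩ <;>
      simp only [aII, bII, cII, dII, t0II, t1II, t2II, mkII, phiII_apply q hq0,
        rowII_0, rowII_1, rowII_2, rowII_3, rowII_4, rowII_5, rowII_6]

end
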